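/- arXiv:1607.07256 — 2 statements merged into one kernel-verified Lean document; each statement's English description precedes it below -/
import Mathlib

section
/- Let S be partitioned into sets S_i (i ∈ ℤ) of segments lying in horizontal unit strips, such that no unit square can cover segments from S_i and S_j whenever |i - j| ≥ 2. Let Q_i be a minimum cover of S_i by unit squares, Q_odd = ⋃_{i odd} Q_i, Q_even = ⋃_{i even} Q_i, and OPT a minimum cover of S. Then |Q_odd| ≤ |OPT|, |Q_even| ≤ |OPT|, and hence |Q_odd| + |Q_even| ≤ 2|OPT|. -/
/-- A unit square with lower-left corner `c` covers a segment `s` (a pair of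
endpoints) if it contains at least one endpoint of `s`. -/
def Covers (c : ℝ × ℝ) (s : (ℝ × ℝ) × (ℝ × ℝ)) : Prop :=
  s.1 ∈ Set.Icc c (c + (1, 1)) ∨ s.2 ∈ Set.Icc c (c + (1, 1))

open scoped Classical in
/-- `S` is partitioned into strip classes `S i` (`i ∈ ℤ`, pairwise
disjoint, nonempty only for indices in a finite set `I`) such that no unit square
covers segments from `S i` and `S j` when `|i - j| ≥ 2`; `Q i` is a minimum cover
of `S i`; `OPT` is a minimum cover of all of `S`.  Then
`|Q_odd| ≤ |OPT|`, `|Q_even| ≤ |OPT|` and `|Q_odd| + |Q_even| ≤ 2|OPT|`. -/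
theorem stmt_5 (S : ℤ → Finset ((ℝ × ℝ) × (ℝ × ℝ))) (Q : ℤ → Finset (ℝ × ℝ))
    (I : Finset ℤ)
    (hdisj : ∀ i j : ℤ, i ≠ j → Disjoint (S i) (S j))
    (hcross : ∀ i j : ℤ, 2 ≤ |i - j| → ∀ s ∈ S i, ∀ t ∈ S j,
        ∀ c : ℝ × ℝ, ¬ (Covers c s ∧ Covers c t))
    (hfin : ∀ i ∉ I, S i = ∅ ∧ Q i = ∅)
    (hQcov : ∀ i : ℤ, ∀ s ∈ S i, ∃ c ∈ Q i, Covers c s)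
    (hQmin : ∀ i : ℤ, ∀ T : Finset (ℝ × ℝ),
        (∀ s ∈ S i, ∃ c ∈ T, Covers c s) → (Q i).card ≤ T.card)
    (OPT : Finset (ℝ × ℝ))
    (hOPT : ∀ i : ℤ, ∀ s ∈ S i, ∃ c ∈ OPT, Covers c s)
    (hOPTmin : ∀ T : Finset (ℝ × ℝ),
        (∀ i : ℤ, ∀ s ∈ S i, ∃ c ∈ T, Covers c s) → OPT.card ≤ T.card) :
    ((I.filter (fun i => Odd i)).biUnion Q).card ≤ OPT.card ∧
    ((I.filter (fun i => Even i)).biUnion Q).card ≤ OPT.card ∧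
    ((I.filter (fun i => Odd i)).biUnion Q).card +
      ((I.filter (fun i => Even i)).biUnion Q).card ≤ 2 * OPT.card := by

  classical
  have main : ∀ J : Finset ℤ, (∀ i ∈ J, ∀ j ∈ J, i ≠ j → 2 ≤ |i - j|) →
      (J.biUnion Q).card ≤ OPT.card := by
    intro J hJ
    set O : ℤ → Finset (ℝ × ℝ) := fun i => OPT.filter (fun c => ∃ s ∈ S i, Covers c s) with hO
    have hQO : ∀ i, (Q i).card ≤ (O i).card := by
      intro i
      apply hQmin
      intro s hs
      obtain ⟨c, hc, hcov⟩ := hOPT i s hs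
      exact ⟨c, Finset.mem_filter.mpr ⟨hc, s, hs, hcov⟩, hcov⟩
    have hdO : ∀ i ∈ J, ∀ j ∈ J, i ≠ j → Disjoint (O i) (O j) := by
      intro i hi j hj hij
      rw [Finset.disjoint_left]
      intro c hci hcj
      obtain ⟨_, s, hs, hcs⟩ := Finset.mem_filter.mp hci
      obtain ⟨_, t, ht, hct⟩ := Finset.mem_filter.mp hcj
      exact hcross i j (hJ i hi j hj hij) s hs t ht c ⟨hcs, hct⟩
    calc (J.biUnion Q).card ≤ ∑ i ∈ J, (Q i).card := Finset.card_biUnion_le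
      _ ≤ ∑ i ∈ J, (O i).card := Finset.sum_le_sum (fun i _ => hQO i)
      _ = (J.biUnion O).card := (Finset.card_biUnion hdO).symm
      _ ≤ OPT.card := Finset.card_le_card (by
          intro c hc
          obtain ⟨i, _, hci⟩ := Finset.mem_biUnion.mp hc
          exact (Finset.mem_filter.mp hci).1)
  have hodd := main (I.filter (fun i => Odd i)) (by
    intro i hi j hj hij
    obtain ⟨a, ha⟩ := (Finset.mem_filter.mp hi).2
    obtain ⟨b, hb⟩ := (Finset.mem_filter.mp hj).2
    rcases abs_cases (i - j) with ⟨h, h2⟩ | ⟨h, h2⟩ <;> rw [h] <;> omega)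
  have heven := main (I.filter (fun i => Even i)) (by
    intro i hi j hj hij
    obtain ⟨a, ha⟩ := (Finset.mem_filter.mp hi).2
    obtain ⟨b, hb⟩ := (Finset.mem_filter.mp hj).2
    rcases abs_cases (i - j) with ⟨h, h2⟩ | ⟨h, h2⟩ <;> rw [h] <;> omega)
  exact ⟨hodd, heven, by omega⟩
end

section
/- Let P be a finite set of points in the closed upper half-plane and R a finite set of axis-parallel unit-width rectangles each of whose bottom edge lies on the x-axis (i.e., each rectangle is [a, a+1] × [0, h] for some a ∈ ℝ and h ≥ 0), such that every point of P is contained in some rectangle of R. Then the minimum number of rectangles in R needed to cover P is at most 2 times the optimal value of the LP relaxation of the natural covering integer program (min ∑_{r∈R} x_r subject to ∑_{r ∋ p} x_r ≥ 1 for all p ∈ P, 0 ≤ x_r). -/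
open Finset

/-- A rectangle is encoded by `r = (a, h)` and is the set `[a, a+1] × [0, h]`. -/
def InRect (r : ℝ × ℝ) (p : ℝ × ℝ) : Prop :=
  r.1 ≤ p.1 ∧ p.1 ≤ r.1 + 1 ∧ 0 ≤ p.2 ∧ p.2 ≤ r.2

open scoped Classical in
lemma stmt_10_aux (n : ℕ) : ∀ (P R : Finset (ℝ × ℝ)), P.card ≤ n →
    (∀ p ∈ P, 0 ≤ p.2) →
    (∀ p ∈ P, ∃ r ∈ R, InRect r p) →
    ∀ (x : ℝ × ℝ → ℝ), (∀ r ∈ R, 0 ≤ x r) →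
    (∀ p ∈ P, 1 ≤ ∑ r ∈ R.filter (fun r => InRect r p), x r) →
    ∃ T ⊆ R, (∀ p ∈ P, ∃ r ∈ T, InRect r p) ∧ (T.card : ℝ) ≤ 2 * ∑ r ∈ R, x r := by
  induction n with
  | zero =>
    intro P R hc hP hcov x hx hfeas
    have hPe : P = ∅ := Finset.card_eq_zero.mp (Nat.le_zero.mp hc)
    subst hPe
    exact ⟨∅, empty_subset _, by simp, by
      simpa using mul_nonneg (by norm_num : (0:ℝ) ≤ 2) (Finset.sum_nonneg hx)⟩
  | succ n ih =>
    intro P R hc hP hcov x hx hfeas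
    rcases P.eq_empty_or_nonempty with rfl | hne
    · exact ⟨∅, empty_subset _, by simp, by
        simpa using mul_nonneg (by norm_num : (0:ℝ) ≤ 2) (Finset.sum_nonneg hx)⟩
    obtain ⟨p, hpP, hpmax⟩ := P.exists_max_image (fun q => q.2) hne
    set C := R.filter (fun r => InRect r p) with hCdef
    have hCne : C.Nonempty := by
      obtain ⟨r, hr, hrp⟩ := hcov p hpP
      exact ⟨r, mem_filter.mpr ⟨hr, hrp⟩⟩
    have hCsub : C ⊆ R := filter_subset _ _
    obtain ⟨rl, hrl, hrlmin⟩ := C.exists_min_image (fun r => r.1) hCne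
    obtain ⟨rr, hrr, hrrmax⟩ := C.exists_max_image (fun r => r.1) hCne
    have hrlp : InRect rl p := (mem_filter.mp hrl).2
    have hrrp : InRect rr p := (mem_filter.mp hrr).2
    set P' := P.filter (fun q => ¬ InRect rl q ∧ ¬ InRect rr q) with hP'def
    have hP'sub : P' ⊆ P := filter_subset _ _
    -- key: a rectangle containing a point of P' is not in C
    have key : ∀ q ∈ P', ∀ r, InRect r q → r ∉ C := by
      intro q hq r hrq hrC
      have hqmem := mem_filter.mp hq
      have hqP : q ∈ P := hqmem.1
      have hql : ¬ InRect rl q := hqmem.2.1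
      have hqr : ¬ InRect rr q := hqmem.2.2
      have hrp : InRect r p := (mem_filter.mp hrC).2
      have hq2 : q.2 ≤ p.2 := hpmax q hqP
      have hq0 : 0 ≤ q.2 := hP q hqP
      rcases le_total q.1 p.1 with h | h
      · exact hql ⟨le_trans (hrlmin r hrC) hrq.1, le_trans h hrlp.2.1, hq0,
          le_trans hq2 hrlp.2.2.2⟩
      · exact hqr ⟨le_trans hrrp.1 h, le_trans hrq.2.1 (by linarith [hrrmax r hrC]),
          hq0, le_trans hq2 hrrp.2.2.2⟩
    have hpnot : p ∉ P' := by
      intro h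
      exact (mem_filter.mp h).2.1 hrlp
    have hcard : P'.card ≤ n := by
      have : P' ⊆ P.erase p := fun q hq =>
        mem_erase.mpr ⟨fun h => hpnot (h ▸ hq), hP'sub hq⟩
      calc P'.card ≤ (P.erase p).card := card_le_card this
        _ = P.card - 1 := card_erase_of_mem hpP
        _ ≤ n := by omega
    -- filters over R \ C agree with filters over R for points of P'
    have hfilter : ∀ q ∈ P', (R \ C).filter (fun r => InRect r q)
        = R.filter (fun r => InRect r q) := by
      intro q hq
      ext r
      simp only [mem_filter, mem_sdiff]
      constructor
      · rintro ⟨⟨hr, -⟩, h2⟩; exact ⟨hr, h2⟩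
      · rintro ⟨hr, h2⟩; exact ⟨⟨hr, key q hq r h2⟩, h2⟩
    have hcov' : ∀ q ∈ P', ∃ r ∈ R \ C, InRect r q := by
      intro q hq
      obtain ⟨r, hr, hrq⟩ := hcov q (hP'sub hq)
      exact ⟨r, mem_sdiff.mpr ⟨hr, key q hq r hrq⟩, hrq⟩
    have hfeas' : ∀ q ∈ P', 1 ≤ ∑ r ∈ (R \ C).filter (fun r => InRect r q), x r := by
      intro q hq
      rw [hfilter q hq]
      exact hfeas q (hP'sub hq)
    obtain ⟨T', hT'sub, hT'cov, hT'card⟩ := ih P' (R \ C) hcard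
      (fun q hq => hP q (hP'sub hq)) hcov' x (fun r hr => hx r (mem_sdiff.mp hr).1) hfeas'
    refine ⟨insert rl (insert rr T'), ?_, ?_, ?_⟩
    · intro r hr
      rcases mem_insert.mp hr with rfl | hr
      · exact hCsub hrl
      rcases mem_insert.mp hr with rfl | hr
      · exact hCsub hrr
      · exact (mem_sdiff.mp (hT'sub hr)).1
    · intro q hq
      by_cases h1 : InRect rl q
      · exact ⟨rl, mem_insert_self _ _, h1⟩
      by_cases h2 : InRect rr q
      · exact ⟨rr, mem_insert.mpr (Or.inr (mem_insert_self _ _)), h2⟩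
      · obtain ⟨r, hr, hrq⟩ := hT'cov q (mem_filter.mpr ⟨hq, h1, h2⟩)
        exact ⟨r, mem_insert.mpr (Or.inr (mem_insert.mpr (Or.inr hr))), hrq⟩
    · have hsplit : ∑ r ∈ R \ C, x r + ∑ r ∈ C, x r = ∑ r ∈ R, x r :=
        Finset.sum_sdiff hCsub
      have hCsum : 1 ≤ ∑ r ∈ C, x r := hfeas p hpP
      have hcardle : (insert rl (insert rr T')).card ≤ T'.card + 2 := by
        calc (insert rl (insert rr T')).card ≤ (insert rr T').card + 1 :=
              card_insert_le _ _
          _ ≤ T'.card + 1 + 1 := by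
              have := card_insert_le rr T'
              omega
          _ = T'.card + 2 := by omega
      have : ((insert rl (insert rr T')).card : ℝ) ≤ (T'.card : ℝ) + 2 := by
        exact_mod_cast hcardle
      linarith [hT'card]

open scoped Classical in
/-- for covering points in the upper half-plane by unit-width
rectangles abutting the x-axis, the integral optimum is at most twice the
LP-relaxation optimum: for every feasible fractional solution `x` there is an
integral cover `T ⊆ R` with `|T| ≤ 2 ∑ x`. -/
theorem stmt_10 (P R : Finset (ℝ × ℝ))
    (hP : ∀ p ∈ P, 0 ≤ p.2) (hR : ∀ r ∈ R, 0 ≤ r.2)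
    (hcov : ∀ p ∈ P, ∃ r ∈ R, InRect r p)
    (x : ℝ × ℝ → ℝ) (hx : ∀ r ∈ R, 0 ≤ x r)
    (hfeas : ∀ p ∈ P, 1 ≤ ∑ r ∈ R.filter (fun r => InRect r p), x r) :
    ∃ T ⊆ R, (∀ p ∈ P, ∃ r ∈ T, InRect r p) ∧ (T.card : ℝ) ≤ 2 * ∑ r ∈ R, x r :=
  stmt_10_aux P.card P R le_rfl hP hcov x hx hfeas
end
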